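/- For every positive integer k, every (2k+1)-regular graph admits an orientation in which no vertex has out-degree in {1, 2, …, k}. -/

import Mathlib

attribute [local instance] Classical.propDecidable

/-- A loopless multigraph: edges indexed by `E` with endpoints in `Sym2 V`. -/
structure Multigraph (V E : Type) where
  ends : E → Sym2 V
  loopless : ∀ e, ¬ (ends e).IsDiag

namespace Multigraph

variable {V E : Type}

/-- Degree of a vertex: number of edges incident to it. -/
noncomputable def deg [Fintype E] (G : Multigraph V E) (v : V) : ℕ :=
  (Finset.univ.filter fun e => v ∈ G.ends e).card

/-- Two vertices are adjacent if some edge joins them. -/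
def Adj (G : Multigraph V E) (u v : V) : Prop :=
  u ≠ v ∧ ∃ e, G.ends e = s(u, v)

/-- An orientation assigns a tail and head to each edge, consistent with its endpoints. -/
structure Orientation (G : Multigraph V E) where
  tail : E → V
  head : E → V
  consistent : ∀ e, G.ends e = s(tail e, head e)

/-- Out-degree of a vertex in an orientation. -/
noncomputable def Orientation.outDeg [Fintype E] {G : Multigraph V E} (D : G.Orientation)
    (v : V) : ℕ :=
  (Finset.univ.filter fun e => D.tail e = v).card

/-- An orientation is `F`-avoiding if no vertex has out-degree in its forbidden list. -/
def Orientation.Avoids [Fintype E] {G : Multigraph V E} (D : G.Orientation)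
    (F : V → Finset ℕ) : Prop :=
  ∀ v, D.outDeg v ∉ F v

/-- Number of edges with both endpoints in `S`. -/
noncomputable def eIn [Fintype E] (G : Multigraph V E) (S : Finset V) : ℕ :=
  (Finset.univ.filter fun e => ∀ w ∈ G.ends e, w ∈ S).card

/-- Number of edges with exactly one endpoint in `S`. -/
noncomputable def cut [Fintype E] (G : Multigraph V E) (S : Finset V) : ℕ :=
  (Finset.univ.filter fun e => (∃ w ∈ G.ends e, w ∈ S) ∧ ¬ ∀ w ∈ G.ends e, w ∈ S).card

/-- Reachability by directed paths in an orientation. -/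
def Orientation.Reach {G : Multigraph V E} (D : G.Orientation) : V → V → Prop :=
  Relation.ReflTransGen fun a b => ∃ e, D.tail e = a ∧ D.head e = b

end Multigraph
namespace Multigraph
variable {V E : Type}

theorem tail_ne_head {G : Multigraph V E} (D : G.Orientation) (e : E) :
    D.tail e ≠ D.head e := by
  intro h
  exact G.loopless e (by rw [D.consistent e, Sym2.mk_isDiag_iff]; exact h)

theorem mem_ends_iff {G : Multigraph V E} (D : G.Orientation) {e : E} {v : V} :
    v ∈ G.ends e ↔ v = D.tail e ∨ v = D.head e := by
  rw [D.consistent e, Sym2.mem_iff]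

/-- In-degree. -/
noncomputable def Orientation.indeg [Fintype E] {G : Multigraph V E} (D : G.Orientation)
    (v : V) : ℕ :=
  (Finset.univ.filter fun e => D.head e = v).card

theorem deg_eq_outDeg_add_indeg [Fintype E] {G : Multigraph V E} (D : G.Orientation) (v : V) :
    G.deg v = D.outDeg v + D.indeg v := by
  classical
  rw [deg, Orientation.outDeg, Orientation.indeg, ← Finset.card_union_of_disjoint]
  · congr 1
    ext e
    simp [mem_ends_iff D, eq_comm]
  · rw [Finset.disjoint_filter]
    intro e _ h1 h2
    exact tail_ne_head D e (h1.trans h2.symm)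

/-- Walks along an orientation. -/
def Orientation.IsWalk {G : Multigraph V E} (D : G.Orientation) : List E → V → V → Prop
  | [], u, v => u = v
  | e :: es, u, v => D.tail e = u ∧ D.IsWalk es (D.head e) v

theorem reach_iff_exists_walk {G : Multigraph V E} (D : G.Orientation) {u v : V} :
    D.Reach u v ↔ ∃ es : List E, D.IsWalk es u v := by
  constructor
  · intro h
    induction h using Relation.ReflTransGen.head_induction_on with
    | refl => exact ⟨[], rfl⟩
    | head hstep _ ih =>
      obtain ⟨e, he1, he2⟩ := hstep
      obtain ⟨es, hes⟩ := ih
      exact ⟨e :: es, he1, by rwa [he2]⟩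
  · rintro ⟨es, hes⟩
    induction es generalizing u with
    | nil => exact hes ▸ Relation.ReflTransGen.refl
    | cons e es ih =>
      obtain ⟨h1, h2⟩ := hes
      exact Relation.ReflTransGen.head ⟨e, h1, rfl⟩ (ih h2)

theorem isWalk_append {G : Multigraph V E} (D : G.Orientation) {as bs : List E} {u v : V} :
    D.IsWalk (as ++ bs) u v ↔ ∃ w, D.IsWalk as u w ∧ D.IsWalk bs w v := by
  induction as generalizing u with
  | nil =>
    simp only [List.nil_append]
    exact ⟨fun h => ⟨u, rfl, h⟩, fun ⟨w, hw, h⟩ => hw ▸ h⟩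
  | cons a as ih =>
    simp only [List.cons_append, Orientation.IsWalk, List.append_eq, ih]
    tauto

end Multigraph
namespace Multigraph
variable {V E : Type}

theorem not_nodup_split {α : Type} {l : List α} (h : ¬ l.Nodup) :
    ∃ (a : α) (as bs cs : List α), l = as ++ a :: (bs ++ a :: cs) := by
  induction l with
  | nil => exact absurd List.nodup_nil h
  | cons x xs ih =>
    by_cases hx : x ∈ xs
    · obtain ⟨bs, cs, rfl⟩ := List.mem_iff_append.mp hx
      exact ⟨x, [], bs, cs, rfl⟩
    · have : ¬ xs.Nodup := fun hn => h (List.nodup_cons.mpr ⟨hx, hn⟩)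
      obtain ⟨a, as, bs, cs, rfl⟩ := ih this
      exact ⟨a, x :: as, bs, cs, rfl⟩

theorem exists_nodup_walk_aux {G : Multigraph V E} (D : G.Orientation) :
    ∀ (n : ℕ) (es : List E) (u v : V), es.length ≤ n → D.IsWalk es u v →
      ∃ es' : List E, es'.Nodup ∧ D.IsWalk es' u v ∧ ∀ e ∈ es', e ∈ es := by
  intro n
  induction n with
  | zero =>
    intro es u v hlen hw
    rw [Nat.le_zero, List.length_eq_zero_iff] at hlen
    subst hlen
    exact ⟨[], List.nodup_nil, hw, fun e he => he⟩
  | succ n ih =>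
    intro es u v hlen hw
    by_cases hn : es.Nodup
    · exact ⟨es, hn, hw, fun e he => he⟩
    · obtain ⟨a, as, bs, cs, rfl⟩ := not_nodup_split hn
      obtain ⟨w₁, h1, h2⟩ := (isWalk_append D).mp hw
      obtain ⟨h3, h4⟩ := h2
      obtain ⟨w₂, h5, h6⟩ := (isWalk_append D).mp h4
      obtain ⟨h7, h8⟩ := h6
      have hw' : D.IsWalk (as ++ a :: cs) u v :=
        (isWalk_append D).mpr ⟨w₁, h1, h3, h8⟩
      have hlen' : (as ++ a :: cs).length ≤ n := by
        simp only [List.length_append, List.length_cons] at hlen ⊢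
        omega
      obtain ⟨es', hn', hw'', hsub⟩ := ih _ u v hlen' hw'
      refine ⟨es', hn', hw'', fun e he => ?_⟩
      have := hsub e he
      simp only [List.mem_append, List.mem_cons] at this ⊢
      tauto

theorem exists_nodup_walk {G : Multigraph V E} (D : G.Orientation) {es : List E} {u v : V}
    (hw : D.IsWalk es u v) :
    ∃ es' : List E, es'.Nodup ∧ D.IsWalk es' u v ∧ ∀ e ∈ es', e ∈ es :=
  exists_nodup_walk_aux D es.length es u v le_rfl hw

theorem walk_edge_reach {G : Multigraph V E} (D : G.Orientation) {es : List E} {u v : V}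
    (hw : D.IsWalk es u v) {e : E} (he : e ∈ es) : D.Reach (D.head e) v := by
  induction es generalizing u with
  | nil => exact absurd he List.not_mem_nil
  | cons e' es ih =>
    obtain ⟨h1, h2⟩ := hw
    rcases List.mem_cons.mp he with rfl | he'
    · exact (reach_iff_exists_walk D).mpr ⟨es, h2⟩
    · exact ih h2 he'

open scoped Classical in
theorem walk_countP {G : Multigraph V E} (D : G.Orientation) {es : List E} {u v : V}
    (hw : D.IsWalk es u v) (w : V) :
    es.countP (fun e => decide (D.tail e = w)) + (if v = w then 1 else 0)
      = es.countP (fun e => decide (D.head e = w)) + (if u = w then 1 else 0) := by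
  induction es generalizing u with
  | nil => rw [hw]; simp
  | cons e es ih =>
    obtain ⟨h1, h2⟩ := hw
    have := ih h2
    rw [List.countP_cons, List.countP_cons]
    simp only [decide_eq_true_eq, h1]
    omega

end Multigraph
namespace Multigraph
variable {V E : Type}

theorem exists_mem_ends (G : Multigraph V E) (e : E) : ∃ w, w ∈ G.ends e := by
  obtain ⟨⟨a, b⟩, h⟩ := Quot.exists_rep (G.ends e)
  exact ⟨a, by rw [← h]; exact Sym2.mem_mk_left a b⟩

theorem exists_ends_eq (G : Multigraph V E) (e : E) :
    ∃ a b, a ≠ b ∧ G.ends e = s(a, b) := by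
  obtain ⟨⟨a, b⟩, h⟩ := Quot.exists_rep (G.ends e)
  have hab : G.ends e = s(a, b) := h.symm
  refine ⟨a, b, fun hd => G.loopless e ?_, hab⟩
  rw [hab, Sym2.mk_isDiag_iff]
  exact hd

theorem finite_of_pos_deg [Fintype E] (G : Multigraph V E)
    (hdeg : ∀ v, 0 < G.deg v) : Finite V := by
  classical
  rw [← Set.finite_univ_iff]
  have hsub : (Set.univ : Set V) ⊆ ⋃ e : E, {v | v ∈ G.ends e} := by
    intro v _
    have : (Finset.univ.filter fun e => v ∈ G.ends e).Nonempty :=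
      Finset.card_pos.mp (hdeg v)
    obtain ⟨e, he⟩ := this
    exact Set.mem_iUnion.mpr ⟨e, (Finset.mem_filter.mp he).2⟩
  refine Set.Finite.subset (Set.finite_iUnion fun e => ?_) hsub
  obtain ⟨a, b, _, hab⟩ := G.exists_ends_eq e
  have : {v | v ∈ G.ends e} = {a, b} := by
    ext w; simp [hab, Sym2.mem_iff]
  rw [this]
  exact (Set.finite_singleton b).insert a

/-- An independent set: no edge lies entirely inside it. -/
def Indep (G : Multigraph V E) (I : Finset V) : Prop :=
  ∀ e : E, ¬ ∀ w ∈ G.ends e, w ∈ I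

theorem exists_max_indep [Fintype V] (G : Multigraph V E) :
    ∃ I : Finset V, G.Indep I ∧ ∀ w ∉ I, ¬ G.Indep (insert w I) := by
  classical
  have hne : (Finset.univ.powerset.filter fun I => G.Indep I).Nonempty := by
    refine ⟨∅, Finset.mem_filter.mpr ⟨Finset.mem_powerset.mpr (Finset.empty_subset _), ?_⟩⟩
    intro e he
    obtain ⟨w, hw⟩ := G.exists_mem_ends e
    exact absurd (he w hw) (Finset.notMem_empty w)
  obtain ⟨I, hI, hmax⟩ := Finset.exists_max_image _ Finset.card hne
  refine ⟨I, (Finset.mem_filter.mp hI).2, fun w hw hind => ?_⟩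
  have : insert w I ∈ Finset.univ.powerset.filter fun I => G.Indep I :=
    Finset.mem_filter.mpr ⟨Finset.mem_powerset.mpr (Finset.subset_univ _), hind⟩
  have := hmax _ this
  rw [Finset.card_insert_of_notMem hw] at this
  omega

theorem max_indep_edge [Fintype V] (G : Multigraph V E) {I : Finset V}
    (hI : G.Indep I) (hmax : ∀ w ∉ I, ¬ G.Indep (insert w I)) {w : V} (hw : w ∉ I) :
    ∃ (e : E) (y : V), y ∈ I ∧ y ≠ w ∧ G.ends e = s(w, y) := by
  have := hmax w hw
  rw [Indep] at this
  push_neg at this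
  obtain ⟨e, he⟩ := this
  obtain ⟨a, b, hab, hends⟩ := G.exists_ends_eq e
  have ha : a ∈ insert w I := he a (by rw [hends]; exact Sym2.mem_mk_left a b)
  have hb : b ∈ insert w I := he b (by rw [hends]; exact Sym2.mem_mk_right a b)
  rw [Finset.mem_insert] at ha hb
  have hnot : ¬ (a ∈ I ∧ b ∈ I) := by
    rintro ⟨h1, h2⟩
    refine hI e (fun x hx => ?_)
    rw [hends, Sym2.mem_iff] at hx
    rcases hx with rfl | rfl <;> assumption
  rcases ha with rfl | ha
  · rcases hb with rfl | hb
    · exact absurd rfl hab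
    · exact ⟨e, b, hb, fun h => hab h.symm, hends⟩
  · rcases hb with rfl | hb
    · exact ⟨e, a, ha, hab, by rw [hends, Sym2.eq_swap]⟩
    · exact absurd ⟨ha, hb⟩ hnot

/-- An orientation pointing every edge that touches `I` into `I`. -/
def GoodO (G : Multigraph V E) (I : Finset V) (D : G.Orientation) : Prop :=
  ∀ e : E, (∃ w ∈ G.ends e, w ∈ I) → D.head e ∈ I

theorem exists_good (G : Multigraph V E) (I : Finset V) :
    ∃ D : G.Orientation, G.GoodO I D := by
  classical
  have key : ∀ e : E, ∃ p : V × V, G.ends e = s(p.1, p.2) ∧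
      ((∃ w ∈ G.ends e, w ∈ I) → p.2 ∈ I) := by
    intro e
    obtain ⟨a, b, hab, hends⟩ := G.exists_ends_eq e
    by_cases hb : b ∈ I
    · exact ⟨(a, b), hends, fun _ => hb⟩
    · by_cases ha : a ∈ I
      · exact ⟨(b, a), by rw [hends, Sym2.eq_swap], fun _ => ha⟩
      · refine ⟨(a, b), hends, fun ⟨w, hw, hwI⟩ => ?_⟩
        rw [hends, Sym2.mem_iff] at hw
        rcases hw with rfl | rfl <;> [exact absurd hwI ha; exact absurd hwI hb]
  choose f hf1 hf2 using key
  exact ⟨⟨fun e => (f e).1, fun e => (f e).2, hf1⟩, fun e h => hf2 e h⟩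

theorem tail_not_mem_of_good (G : Multigraph V E) {I : Finset V} {D : G.Orientation}
    (hI : G.Indep I) (hD : G.GoodO I D) (e : E) : D.tail e ∉ I := by
  intro ht
  have hh : D.head e ∈ I := hD e ⟨D.tail e, (mem_ends_iff D).mpr (Or.inl rfl), ht⟩
  refine hI e (fun x hx => ?_)
  rcases (mem_ends_iff D).mp hx with rfl | rfl <;> assumption

/-- Reverse the edges in the list `F`. -/
noncomputable def Orientation.flip {G : Multigraph V E} (D : G.Orientation) (F : List E) :
    G.Orientation where
  tail := fun e => if e ∈ F then D.head e else D.tail e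
  head := fun e => if e ∈ F then D.tail e else D.head e
  consistent := by
    classical
    intro e
    by_cases h : e ∈ F <;> simp only [h, if_pos, if_neg, if_true, if_false, ite_true, ite_false]
    · rw [D.consistent e, Sym2.eq_swap]
    · exact D.consistent e

theorem flip_good (G : Multigraph V E) {I : Finset V} {D : G.Orientation} {F : List E}
    (hD : G.GoodO I D) (hF : ∀ e ∈ F, ∀ x ∈ G.ends e, x ∉ I) :
    G.GoodO I (D.flip F) := by
  intro e he
  have hne : e ∉ F := by
    intro hmem
    obtain ⟨w, hw, hwI⟩ := he
    exact hF e hmem w hw hwI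
  show (if e ∈ F then D.tail e else D.head e) ∈ I
  rw [if_neg hne]
  exact hD e he

end Multigraph
namespace Multigraph
variable {V E : Type}

open scoped Classical in
theorem toFinset_filter_card {E : Type} {es : List E} (hn : es.Nodup) (p : E → Prop) :
    (es.toFinset.filter fun e => p e).card = es.countP (fun e => decide (p e)) := by
  have h : (es.toFinset.filter fun e => p e)
      = (es.filter (fun e => decide (p e))).toFinset := by
    ext x; simp
  rw [List.countP_eq_length_filter, h, List.toFinset_card_of_nodup (hn.filter _)]

open scoped Classical in
theorem flip_indeg [Fintype E] {G : Multigraph V E} (D : G.Orientation) {es : List E}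
    (hn : es.Nodup) (w : V) :
    (D.flip es).indeg w + es.countP (fun e => decide (D.head e = w))
      = D.indeg w + es.countP (fun e => decide (D.tail e = w)) := by
  have h1 : (Finset.univ.filter fun e => (D.flip es).head e = w)
      = (es.toFinset.filter fun e => D.tail e = w)
        ∪ (es.toFinsetᶜ.filter fun e => D.head e = w) := by
    ext e
    by_cases h : e ∈ es <;> simp only [Finset.mem_filter] <;>
      simp [Orientation.flip, h, List.mem_toFinset]
  have h2 : (Finset.univ.filter fun e => D.head e = w)
      = (es.toFinset.filter fun e => D.head e = w)
        ∪ (es.toFinsetᶜ.filter fun e => D.head e = w) := by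
    rw [← Finset.filter_union, Finset.union_compl]
  have hd1 : Disjoint (es.toFinset.filter fun e => D.tail e = w)
      (es.toFinsetᶜ.filter fun e => D.head e = w) :=
    Finset.disjoint_filter_filter disjoint_compl_right
  have hd2 : Disjoint (es.toFinset.filter fun e => D.head e = w)
      (es.toFinsetᶜ.filter fun e => D.head e = w) :=
    Finset.disjoint_filter_filter disjoint_compl_right
  rw [Orientation.indeg, Orientation.indeg, h1, h2, Finset.card_union_of_disjoint hd1,
    Finset.card_union_of_disjoint hd2, toFinset_filter_card hn, toFinset_filter_card hn]
  omega

open scoped Classical in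
theorem flip_walk_indeg [Fintype E] {G : Multigraph V E} (D : G.Orientation) {es : List E}
    {u v : V} (hn : es.Nodup) (hw : D.IsWalk es u v) (huv : u ≠ v) :
    (D.flip es).indeg u = D.indeg u + 1 ∧ D.indeg v = (D.flip es).indeg v + 1 ∧
      ∀ w, w ≠ u → w ≠ v → (D.flip es).indeg w = D.indeg w := by
  refine ⟨?_, ?_, fun w hwu hwv => ?_⟩
  · have hc := walk_countP D hw u
    have hf := flip_indeg D hn u
    rw [if_neg (Ne.symm huv), if_pos rfl] at hc
    omega
  · have hc := walk_countP D hw v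
    have hf := flip_indeg D hn v
    rw [if_pos rfl, if_neg huv] at hc
    omega
  · have hc := walk_countP D hw w
    have hf := flip_indeg D hn w
    rw [if_neg (Ne.symm hwv), if_neg (Ne.symm hwu)] at hc
    omega

end Multigraph
namespace Multigraph
variable {V E : Type}

theorem sum_indeg [Fintype V] [Fintype E] {G : Multigraph V E} (D : G.Orientation)
    (S : Finset V) :
    ∑ u ∈ S, D.indeg u = (Finset.univ.filter fun e => D.head e ∈ S).card := by
  classical
  rw [Finset.card_eq_sum_card_fiberwise
    (fun e he => (Finset.mem_filter.mp he).2 : ∀ e ∈ Finset.univ.filter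
      fun e => D.head e ∈ S, D.head e ∈ S)]
  refine Finset.sum_congr rfl fun u hu => ?_
  rw [Orientation.indeg]
  congr 1
  ext e
  simp only [Finset.mem_filter, Finset.mem_univ, true_and]
  exact ⟨fun h => ⟨h ▸ hu, h⟩, fun h => h.2⟩

theorem filter_ends_card_of_in [Fintype V] {G : Multigraph V E} {S : Finset V} {e : E}
    (h : ∀ w ∈ G.ends e, w ∈ S) :
    (S.filter fun w => w ∈ G.ends e).card = 2 := by
  classical
  obtain ⟨a, b, hab, hends⟩ := G.exists_ends_eq e
  have ha : a ∈ S := h a (by rw [hends]; exact Sym2.mem_mk_left a b)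
  have hb : b ∈ S := h b (by rw [hends]; exact Sym2.mem_mk_right a b)
  have : (S.filter fun w => w ∈ G.ends e) = {a, b} := by
    ext w
    simp only [Finset.mem_filter, hends, Sym2.mem_iff, Finset.mem_insert, Finset.mem_singleton]
    constructor
    · rintro ⟨_, h⟩; exact h
    · rintro (rfl | rfl) <;> simp [ha, hb]
  rw [this, Finset.card_pair hab]

theorem filter_ends_card_of_cut [Fintype V] {G : Multigraph V E} {S : Finset V} {e : E}
    (h1 : ∃ w ∈ G.ends e, w ∈ S) (h2 : ¬ ∀ w ∈ G.ends e, w ∈ S) :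
    (S.filter fun w => w ∈ G.ends e).card = 1 := by
  classical
  obtain ⟨a, b, hab, hends⟩ := G.exists_ends_eq e
  have hmem : ∀ w, w ∈ G.ends e ↔ (w = a ∨ w = b) := by
    intro w; rw [hends, Sym2.mem_iff]
  obtain ⟨w, hw, hwS⟩ := h1
  have key : (a ∈ S ∧ b ∉ S) ∨ (a ∉ S ∧ b ∈ S) := by
    by_cases ha : a ∈ S <;> by_cases hb : b ∈ S
    · exact absurd (fun x hx => by rcases (hmem x).mp hx with rfl | rfl <;> assumption) h2
    · exact Or.inl ⟨ha, hb⟩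
    · exact Or.inr ⟨ha, hb⟩
    · rcases (hmem w).mp hw with rfl | rfl <;> [exact absurd hwS ha; exact absurd hwS hb]
  have : (S.filter fun w => w ∈ G.ends e) = {if a ∈ S then a else b} := by
    ext x
    simp only [Finset.mem_filter, hmem, Finset.mem_singleton]
    rcases key with ⟨ha, hb⟩ | ⟨ha, hb⟩
    · rw [if_pos ha]
      constructor
      · rintro ⟨hx, rfl | rfl⟩; rfl; exact absurd hx hb
      · rintro rfl; exact ⟨ha, Or.inl rfl⟩
    · rw [if_neg ha]
      constructor
      · rintro ⟨hx, rfl | rfl⟩; exact absurd hx ha; rfl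
      · rintro rfl; exact ⟨hb, Or.inr rfl⟩
  rw [this, Finset.card_singleton]

theorem handshake [Fintype V] [Fintype E] (G : Multigraph V E) (S : Finset V) :
    ∑ w ∈ S, G.deg w = 2 * G.eIn S + G.cut S := by
  classical
  have step1 : ∑ w ∈ S, G.deg w = ∑ e : E, (S.filter fun w => w ∈ G.ends e).card := by
    simp only [deg, Finset.card_filter]
    rw [Finset.sum_comm]
  rw [step1, ← Finset.sum_filter_add_sum_filter_not Finset.univ
    (fun e => ∀ w ∈ G.ends e, w ∈ S)]
  have hA : ∑ e ∈ Finset.univ.filter (fun e => ∀ w ∈ G.ends e, w ∈ S),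
      (S.filter fun w => w ∈ G.ends e).card = 2 * G.eIn S := by
    rw [Finset.sum_congr rfl (fun e he => filter_ends_card_of_in (Finset.mem_filter.mp he).2),
      Finset.sum_const, eIn, smul_eq_mul, mul_comm]
    congr!
  have hB : ∑ e ∈ Finset.univ.filter (fun e => ¬ ∀ w ∈ G.ends e, w ∈ S),
      (S.filter fun w => w ∈ G.ends e).card = G.cut S := by
    rw [← Finset.sum_filter_add_sum_filter_not
      (Finset.univ.filter fun e => ¬ ∀ w ∈ G.ends e, w ∈ S)
      (fun e => ∃ w ∈ G.ends e, w ∈ S)]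
    have h0 : ∑ e ∈ (Finset.univ.filter fun e => ¬ ∀ w ∈ G.ends e, w ∈ S).filter
        (fun e => ¬ ∃ w ∈ G.ends e, w ∈ S), (S.filter fun w => w ∈ G.ends e).card = 0 := by
      refine Finset.sum_eq_zero fun e he => ?_
      have := (Finset.mem_filter.mp he).2
      rw [Finset.card_eq_zero]
      refine Finset.filter_eq_empty_iff.mpr fun {x} hx hmem => this ⟨x, hmem, hx⟩
    rw [h0, add_zero]
    have h1 : ∀ e ∈ (Finset.univ.filter fun e => ¬ ∀ w ∈ G.ends e, w ∈ S).filter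
        (fun e => ∃ w ∈ G.ends e, w ∈ S), (S.filter fun w => w ∈ G.ends e).card = 1 := by
      intro e he
      rw [Finset.mem_filter, Finset.mem_filter] at he
      exact filter_ends_card_of_cut he.2 he.1.2
    rw [Finset.sum_congr rfl h1, Finset.sum_const, smul_eq_mul, mul_one]
    simp only [cut]
    congr 1
    ext e
    simp only [Finset.mem_filter, Finset.mem_univ, true_and]
    tauto
  rw [hA, hB]

theorem card_le_cut [Fintype V] [Fintype E] (G : Multigraph V E) {I S : Finset V}
    (hI : G.Indep I) (hmax : ∀ w ∉ I, ¬ G.Indep (insert w I))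
    (hdisj : ∀ w ∈ S, w ∉ I) : S.card ≤ G.cut S := by
  classical
  rcases S.eq_empty_or_nonempty with rfl | ⟨w₀, hw₀⟩
  · simp
  obtain ⟨e₀, y₀, _⟩ := G.max_indep_edge hI hmax (hdisj w₀ hw₀)
  have key : ∀ w : V, ∃ p : E × V, w ∈ S →
      p.2 ∈ I ∧ p.2 ≠ w ∧ G.ends p.1 = s(w, p.2) := by
    intro w
    by_cases hw : w ∈ S
    · obtain ⟨e, y, h1, h2, h3⟩ := G.max_indep_edge hI hmax (hdisj w hw)
      exact ⟨(e, y), fun _ => ⟨h1, h2, h3⟩⟩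
    · exact ⟨(e₀, y₀), fun h => absurd h hw⟩
  choose f hf using key
  apply Finset.card_le_card_of_injOn (fun w => (f w).1)
  · intro w hw
    obtain ⟨h1, h2, h3⟩ := hf w hw
    simp only [Finset.mem_coe] at hw
    simp only [cut, Finset.mem_coe, Finset.mem_filter]
    refine ⟨Finset.mem_univ _, ⟨w, by rw [h3]; exact Sym2.mem_mk_left _ _, hw⟩, fun hall => ?_⟩
    have : (f w).2 ∈ S := hall _ (by rw [h3]; exact Sym2.mem_mk_right _ _)
    exact hdisj _ this h1
  · intro w hw w' hw' heq
    simp only [Finset.mem_coe] at hw hw'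
    obtain ⟨h1, h2, h3⟩ := hf w hw
    obtain ⟨h1', h2', h3'⟩ := hf w' hw'
    have heq' : (f w).1 = (f w').1 := heq
    have : s(w, (f w).2) = s(w', (f w').2) := by rw [← h3, ← h3', heq']
    rcases Sym2.eq_iff.mp this with ⟨h, _⟩ | ⟨h, _⟩
    · exact h
    · exact absurd h1' (by rw [← h]; exact hdisj w hw)

theorem eIn_eq_heads [Fintype V] [Fintype E] {G : Multigraph V E} (D : G.Orientation)
    {S : Finset V} (hclosed : ∀ e, D.head e ∈ S → D.tail e ∈ S) :
    (Finset.univ.filter fun e => D.head e ∈ S).card = G.eIn S := by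
  classical
  rw [eIn]
  congr 1
  ext e
  simp only [Finset.mem_filter, Finset.mem_univ, true_and]
  constructor
  · intro h w hw
    rcases (mem_ends_iff D).mp hw with rfl | rfl
    · exact hclosed e h
    · exact h
  · intro h
    exact h _ ((mem_ends_iff D).mpr (Or.inr rfl))

end Multigraph
/-- every `(2k+1)`-regular graph admits a `{1,…,k}`-avoiding
orientation. -/
theorem stmt12 {V E : Type} [Fintype E] (k : ℕ) (hk : 0 < k)
    (G : Multigraph V E) (hreg : ∀ v, G.deg v = 2 * k + 1) :
    ∃ D : G.Orientation, ∀ v, D.outDeg v ∉ Finset.Icc 1 k := by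
  classical
  open Multigraph in
  have hfin : Finite V := G.finite_of_pos_deg (fun v => by rw [hreg]; omega)
  cases nonempty_fintype V
  obtain ⟨I, hI, hmax⟩ := G.exists_max_indep
  have hPne : ∃ n, ∃ D : G.Orientation, G.GoodO I D ∧
      (∑ w ∈ Iᶜ, (D.indeg w - k)) = n := by
    obtain ⟨D, hD⟩ := G.exists_good I
    exact ⟨_, D, hD, rfl⟩
  obtain ⟨D, hD, hDn⟩ := Nat.sInf_mem hPne
  have hmin : ∀ D' : G.Orientation, G.GoodO I D' →
      (∑ w ∈ Iᶜ, (D.indeg w - k)) ≤ ∑ w ∈ Iᶜ, (D'.indeg w - k) := by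
    intro D' h
    rw [hDn]
    exact Nat.sInf_le ⟨D', h, rfl⟩
  have hkey : ∀ v, v ∉ I → D.indeg v ≤ k := by
    intro v hv
    by_contra hbig
    push_neg at hbig
    set S : Finset V := Finset.univ.filter (fun u => D.Reach u v) with hS
    have hvS : v ∈ S := Finset.mem_filter.mpr ⟨Finset.mem_univ v, Relation.ReflTransGen.refl⟩
    have hSI : ∀ u ∈ S, u ∉ I := by
      intro u hu huI
      have hr : D.Reach u v := (Finset.mem_filter.mp hu).2
      rcases Relation.ReflTransGen.cases_head hr with rfl | ⟨_, ⟨e, he1, _⟩, _⟩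
      · exact hv huI
      · exact G.tail_not_mem_of_good hI hD e (he1 ▸ huI)
    have hclosed : ∀ e, D.head e ∈ S → D.tail e ∈ S := by
      intro e he
      refine Finset.mem_filter.mpr ⟨Finset.mem_univ _,
        Relation.ReflTransGen.head ⟨e, rfl, rfl⟩ (Finset.mem_filter.mp he).2⟩
    by_cases hA : ∃ u ∈ S, D.indeg u < k
    · obtain ⟨u, hu, hlt⟩ := hA
      have hr : D.Reach u v := (Finset.mem_filter.mp hu).2
      have huv : u ≠ v := by
        rintro rfl
        omega
      obtain ⟨es, hwalk⟩ := (reach_iff_exists_walk D).mp hr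
      obtain ⟨es', hnodup, hw', _⟩ := exists_nodup_walk D hwalk
      have hedges : ∀ e ∈ es', ∀ x ∈ G.ends e, x ∉ I := by
        intro e he x hx hxI
        have hheadS : D.head e ∈ S := Finset.mem_filter.mpr
          ⟨Finset.mem_univ _, walk_edge_reach D hw' he⟩
        exact hSI _ hheadS (hD e ⟨x, hx, hxI⟩)
      have hgood' : G.GoodO I (D.flip es') := flip_good G hD hedges
      obtain ⟨hiu, hiv, hother⟩ := flip_walk_indeg D hnodup hw' huv
      have hlt' : (∑ w ∈ Iᶜ, ((D.flip es').indeg w - k)) < ∑ w ∈ Iᶜ, (D.indeg w - k) := by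
        apply Finset.sum_lt_sum
        · intro w _
          by_cases hwu : w = u
          · subst hwu
            rw [hiu]
            omega
          · by_cases hwv : w = v
            · subst hwv
              omega
            · rw [hother w hwu hwv]
        · exact ⟨v, Finset.mem_compl.mpr hv, by omega⟩
      exact absurd (hmin _ hgood') (by omega)
    · push_neg at hA
      have hsum : k * S.card < ∑ u ∈ S, D.indeg u := by
        have := Finset.sum_lt_sum hA ⟨v, hvS, hbig⟩
        rwa [Finset.sum_const, smul_eq_mul, mul_comm] at this
      have h1 : ∑ u ∈ S, D.indeg u = G.eIn S := by
        rw [sum_indeg D S, eIn_eq_heads D hclosed]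
      have h2 := G.handshake S
      have h3 : ∑ w ∈ S, G.deg w = (2 * k + 1) * S.card := by
        rw [Finset.sum_congr rfl (fun w _ => hreg w), Finset.sum_const, smul_eq_mul, mul_comm]
      have h4 := G.card_le_cut hI hmax hSI
      have h5 : (2 * k + 1) * S.card = 2 * (k * S.card) + S.card := by ring
      omega
  refine ⟨D, fun v => ?_⟩
  rw [Finset.mem_Icc]
  by_cases hv : v ∈ I
  · have h0 : D.outDeg v = 0 := by
      rw [Orientation.outDeg, Finset.card_eq_zero]
      refine Finset.filter_eq_empty_iff.mpr fun {e} _ ht => ?_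
      exact G.tail_not_mem_of_good hI hD e (ht ▸ hv)
    rw [h0]
    omega
  · have h := deg_eq_outDeg_add_indeg D v
    rw [hreg] at h
    have := hkey v hv
    omega
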